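/- For every integer $\ell \ge 0$ and all $\tau, r > 0$, the function $\psi(\tau, r) = \frac{r^{\ell+1}}{\tau^{\ell+1}(\tau+r)^{\ell+1}}$ satisfies the identity $(r^2\partial_r)^{\ell+1}\psi(\tau, r) = \frac{(2\ell+1)!}{\ell!}\left(\frac{r}{\tau+r}\right)^{2\ell+2}$, where $\partial_r$ is the partial derivative in $r$ at fixed $\tau$, and $(r^2\partial_r)^{\ell+1}$ denotes the $(\ell+1)$-fold composition of the operator $f \mapsto r^2\,\partial_r f$. -/

import Mathlib

/-- For `ψ(τ,r) = r^{ℓ+1}/(τ^{ℓ+1}(τ+r)^{ℓ+1})` and `τ, r > 0`,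
`(r²∂_r)^{ℓ+1} ψ = ((2ℓ+1)!/ℓ!) (r/(τ+r))^{2ℓ+2}`. -/
theorem stmt6 (ℓ : ℕ) (τ r : ℝ) (hτ : 0 < τ) (hr : 0 < r) :
    ((fun f : ℝ → ℝ => fun s : ℝ => s ^ 2 * deriv f s)^[ℓ + 1]
        (fun s : ℝ => s ^ (ℓ + 1) / (τ ^ (ℓ + 1) * (τ + s) ^ (ℓ + 1)))) r
      = ((Nat.factorial (2 * ℓ + 1) : ℝ) / (Nat.factorial ℓ : ℝ))
          * (r / (τ + r)) ^ (2 * ℓ + 2) := by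
  have hτ' : τ ≠ 0 := hτ.ne'
  set F : (ℝ → ℝ) → (ℝ → ℝ) := fun f s => s ^ 2 * deriv f s with hF
  set ψ : ℝ → ℝ := fun s : ℝ => s ^ (ℓ + 1) / (τ ^ (ℓ + 1) * (τ + s) ^ (ℓ + 1)) with hψ
  have key : ∀ k, k ≤ ℓ + 1 → ∀ s : ℝ, 0 < s →
      (F^[k] ψ) s
        = ((Nat.factorial (ℓ + k) : ℝ) / (Nat.factorial ℓ : ℝ))
            * (1 / τ ^ (ℓ + 1 - k)) * (s / (τ + s)) ^ (ℓ + 1 + k) := by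
    intro k
    induction k with
    | zero =>
      intro _ s hs
      simp only [Function.iterate_zero, id, Nat.add_zero, Nat.sub_zero, hψ]
      rw [div_self (by positivity), one_mul, div_pow, div_mul_div_comm, one_mul]
    | succ k ih =>
      intro hk s hs
      have hk' : k ≤ ℓ := by omega
      have hts : τ + s ≠ 0 := by positivity
      set c : ℝ := ((Nat.factorial (ℓ + k) : ℝ) / (Nat.factorial ℓ : ℝ))
            * (1 / τ ^ (ℓ + 1 - k)) with hc
      rw [Function.iterate_succ_apply']
      have hEq : deriv (F^[k] ψ) s
          = deriv (fun x : ℝ => c * (x / (τ + x)) ^ (ℓ + 1 + k)) s := by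
        apply Filter.EventuallyEq.deriv_eq
        filter_upwards [isOpen_Ioi.mem_nhds hs] with x hx
        exact ih (by omega) x hx
      have h1 : HasDerivAt (fun x : ℝ => x / (τ + x)) (τ / (τ + s) ^ 2) s := by
        have := (hasDerivAt_id s).div ((hasDerivAt_const s τ).add (hasDerivAt_id s)) hts
        refine this.congr_deriv ?_
        simp only [Pi.add_apply, id]
        ring
      have h2 : HasDerivAt (fun x : ℝ => c * (x / (τ + x)) ^ (ℓ + 1 + k))
          (c * (((ℓ + 1 + k : ℕ) : ℝ) * (s / (τ + s)) ^ (ℓ + 1 + k - 1)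
            * (τ / (τ + s) ^ 2))) s := (h1.pow _).const_mul c
      show s ^ 2 * deriv (F^[k] ψ) s = _
      rw [hEq, h2.deriv]
      have e0 : ℓ + 1 + k - 1 = ℓ + k := by omega
      have e1 : ℓ + 1 + (k + 1) = (ℓ + k) + 2 := by omega
      have e2 : ℓ + (k + 1) = (ℓ + k) + 1 := by omega
      have e3 : ℓ + 1 - k = (ℓ - k) + 1 := by omega
      have e4 : ℓ + 1 - (k + 1) = ℓ - k := by omega
      rw [e0, e1, e2, e4, hc, e3, Nat.factorial_succ]
      have hfl : (Nat.factorial ℓ : ℝ) ≠ 0 := by positivity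
      push_cast
      field_simp
      rw [pow_add _ (ℓ + k) 2, div_pow s (τ + s) 2, pow_succ τ]
      field_simp
      ring
  have := key (ℓ + 1) le_rfl r hr
  have e5 : ℓ + (ℓ + 1) = 2 * ℓ + 1 := by omega
  have e6 : ℓ + 1 + (ℓ + 1) = 2 * ℓ + 2 := by omega
  rw [e5, e6, Nat.sub_self, pow_zero, div_one, mul_one] at this
  exact this
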